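/- Let p ≥ 2 be an integer and let G be the graph with vertex set {u_i, t_i, b_i, d_i : 0 ≤ i < 4p} and edge set (all indices modulo 4p) {u_i t_i, u_i t_{i+1}, t_i u_{i+1}, t_i t_{i+1}, t_i b_i, b_i b_{i+1}, b_i d_{i+1}, b_i d_i, d_i b_{i+1} : 0 ≤ i < 4p}. Then the minimum size of a set S of non-edges of G such that G+S contains no induced C4 is 4p; moreover, there are exactly two such sets of size 4p, namely {t_i b_{i+1} : 0 ≤ i < 4p} and {t_{i+1} b_i : 0 ≤ i < 4p}. -/

import Mathlib

open SimpleGraph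
open Fin.NatCast Fin.CommRing

/-- The cyclic "tape" variable gadget of the reduction from 3-SAT to `C₄`-free completion:
vertices `(i, r)` with `i : Fin (4p)` and `r : Fin 4`, where `r = 0, 1, 2, 3` encode
`u_i, t_i, b_i, d_i`, and the edges are (indices modulo `4p`):
`u_i t_i`, `u_i t_{i+1}`, `t_i u_{i+1}`, `t_i t_{i+1}`, `t_i b_i`, `b_i b_{i+1}`,
`b_i d_{i+1}`, `b_i d_i`, `d_i b_{i+1}`. -/
def tapeGadget (p : ℕ) : SimpleGraph (Fin (4 * p) × Fin 4) :=
  SimpleGraph.fromRel (fun u w =>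
    ((w.1 : ℕ) = (u.1 : ℕ) ∧
      (((u.2 : ℕ) = 0 ∧ (w.2 : ℕ) = 1) ∨ ((u.2 : ℕ) = 1 ∧ (w.2 : ℕ) = 2) ∨
       ((u.2 : ℕ) = 2 ∧ (w.2 : ℕ) = 3))) ∨
    ((w.1 : ℕ) = ((u.1 : ℕ) + 1) % (4 * p) ∧
      (((u.2 : ℕ) = 0 ∧ (w.2 : ℕ) = 1) ∨ ((u.2 : ℕ) = 1 ∧ (w.2 : ℕ) = 0) ∨
       ((u.2 : ℕ) = 1 ∧ (w.2 : ℕ) = 1) ∨ ((u.2 : ℕ) = 2 ∧ (w.2 : ℕ) = 2) ∨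
       ((u.2 : ℕ) = 2 ∧ (w.2 : ℕ) = 3) ∨ ((u.2 : ℕ) = 3 ∧ (w.2 : ℕ) = 2))))


/-! ### basic defs -/

def tape (n : ℕ) : SimpleGraph (Fin n × Fin 4) :=
  SimpleGraph.fromRel (fun u w =>
    ((w.1 : ℕ) = (u.1 : ℕ) ∧
      (((u.2 : ℕ) = 0 ∧ (w.2 : ℕ) = 1) ∨ ((u.2 : ℕ) = 1 ∧ (w.2 : ℕ) = 2) ∨
       ((u.2 : ℕ) = 2 ∧ (w.2 : ℕ) = 3))) ∨
    ((w.1 : ℕ) = ((u.1 : ℕ) + 1) % n ∧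
      (((u.2 : ℕ) = 0 ∧ (w.2 : ℕ) = 1) ∨ ((u.2 : ℕ) = 1 ∧ (w.2 : ℕ) = 0) ∨
       ((u.2 : ℕ) = 1 ∧ (w.2 : ℕ) = 1) ∨ ((u.2 : ℕ) = 2 ∧ (w.2 : ℕ) = 2) ∨
       ((u.2 : ℕ) = 2 ∧ (w.2 : ℕ) = 3) ∨ ((u.2 : ℕ) = 3 ∧ (w.2 : ℕ) = 2))))

def rightSet (n : ℕ) : Set (Sym2 (Fin n × Fin 4)) :=
  {e | ∃ i j : Fin n, (j : ℕ) = ((i : ℕ) + 1) % n ∧ e = s((i, (1 : Fin 4)), (j, (2 : Fin 4)))}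

def leftSet (n : ℕ) : Set (Sym2 (Fin n × Fin 4)) :=
  {e | ∃ i j : Fin n, (j : ℕ) = ((i : ℕ) + 1) % n ∧ e = s((j, (1 : Fin 4)), (i, (2 : Fin 4)))}

def chordSet (n : ℕ) : Bool → Set (Sym2 (Fin n × Fin 4))
  | true => rightSet n
  | false => leftSet n

def Hg (n : ℕ) (dir : Bool) : SimpleGraph (Fin n × Fin 4) :=
  tape n ⊔ fromEdgeSet (chordSet n dir)

def rel1 (r s : Fin 4) : Prop :=
  ((r : ℕ) = 0 ∧ (s : ℕ) = 1) ∨ ((r : ℕ) = 1 ∧ (s : ℕ) = 2) ∨ ((r : ℕ) = 2 ∧ (s : ℕ) = 3)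

def rel2 (r s : Fin 4) : Prop :=
  ((r : ℕ) = 0 ∧ (s : ℕ) = 1) ∨ ((r : ℕ) = 1 ∧ (s : ℕ) = 0) ∨
  ((r : ℕ) = 1 ∧ (s : ℕ) = 1) ∨ ((r : ℕ) = 2 ∧ (s : ℕ) = 2) ∨
  ((r : ℕ) = 2 ∧ (s : ℕ) = 3) ∨ ((r : ℕ) = 3 ∧ (s : ℕ) = 2)

instance (r s : Fin 4) : Decidable (rel1 r s) := by unfold rel1; infer_instance
instance (r s : Fin 4) : Decidable (rel2 r s) := by unfold rel2; infer_instance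

/-! ### abstract (position/row) model -/

def relN (a b : ℕ × Fin 4) : Prop :=
  (b.1 = a.1 ∧ rel1 a.2 b.2) ∨ (b.1 = a.1 + 1 ∧ rel2 a.2 b.2)

def chordN : Bool → ℕ × Fin 4 → ℕ × Fin 4 → Prop
  | true, a, b => (b.1 = a.1 + 1 ∧ a.2 = 1 ∧ b.2 = 2) ∨ (a.1 = b.1 + 1 ∧ b.2 = 1 ∧ a.2 = 2)
  | false, a, b => (a.1 = b.1 + 1 ∧ a.2 = 1 ∧ b.2 = 2) ∨ (b.1 = a.1 + 1 ∧ a.2 = 2 ∧ b.2 = 1)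

def aadjN (dir : Bool) (a b : ℕ × Fin 4) : Prop :=
  a ≠ b ∧ (relN a b ∨ relN b a ∨ chordN dir a b)

instance (a b : ℕ × Fin 4) : Decidable (relN a b) := by unfold relN; infer_instance
instance (dir : Bool) (a b : ℕ × Fin 4) : Decidable (chordN dir a b) := by
  cases dir <;> (unfold chordN; infer_instance)
instance (dir : Bool) (a b : ℕ × Fin 4) : Decidable (aadjN dir a b) := by
  unfold aadjN; infer_instance

set_option maxRecDepth 10000 in
lemma abs_noC4 : ∀ (dir : Bool) (r0 : Fin 4) (v1 : Fin 3 × Fin 4) (v2 : Fin 5 × Fin 4)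
    (v3 : Fin 7 × Fin 4),
    aadjN dir (3, r0) ((v1.1 : ℕ) + 2, v1.2) →
    aadjN dir ((v1.1 : ℕ) + 2, v1.2) ((v2.1 : ℕ) + 1, v2.2) →
    aadjN dir ((v2.1 : ℕ) + 1, v2.2) ((v3.1 : ℕ), v3.2) →
    aadjN dir ((v3.1 : ℕ), v3.2) (3, r0) →
    ((3 : ℕ), r0) ≠ ((v2.1 : ℕ) + 1, v2.2) →
    ((v1.1 : ℕ) + 2, v1.2) ≠ ((v3.1 : ℕ), v3.2) →
    ¬ aadjN dir (3, r0) ((v2.1 : ℕ) + 1, v2.2) →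
    ¬ aadjN dir ((v1.1 : ℕ) + 2, v1.2) ((v3.1 : ℕ), v3.2) → False := by
  decide

/-! ### Fin-arithmetic adjacency -/

section Aux
variable {n : ℕ} [NeZero n] (hn : 8 ≤ n)

def relF (x y : Fin n × Fin 4) : Prop :=
  (y.1 = x.1 ∧ rel1 x.2 y.2) ∨ (y.1 = x.1 + 1 ∧ rel2 x.2 y.2)

include hn

lemma succ_val_iff' {i j : Fin n} : (j : ℕ) = ((i : ℕ) + 1) % n ↔ j = i + 1 := by
  have h1 : ((i + 1 : Fin n) : ℕ) = ((i : ℕ) + 1) % n := by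
    rw [Fin.val_add, Fin.val_one', Nat.one_mod_eq_one.mpr (by omega)]
  rw [Fin.ext_iff, h1]

lemma tape_adj_iff {x y : Fin n × Fin 4} :
    (tape n).Adj x y ↔ x ≠ y ∧ (relF x y ∨ relF y x) := by
  rw [tape, fromRel_adj]
  simp only [relF, rel1, rel2, succ_val_iff' hn, Fin.val_inj]

lemma mem_rightSet_iff {x y : Fin n × Fin 4} :
    s(x, y) ∈ rightSet n ↔
      (y.1 = x.1 + 1 ∧ x.2 = 1 ∧ y.2 = 2) ∨ (x.1 = y.1 + 1 ∧ y.2 = 1 ∧ x.2 = 2) := by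
  constructor
  · rintro ⟨i, j, hj, he⟩
    rw [succ_val_iff' hn] at hj
    subst hj
    rcases Sym2.eq_iff.mp he with ⟨h1, h2⟩ | ⟨h1, h2⟩ <;>
      rw [Prod.ext_iff] at h1 h2 <;> simp only [] at h1 h2
    · exact Or.inl ⟨by rw [h2.1, h1.1], h1.2, h2.2⟩
    · exact Or.inr ⟨by rw [h1.1, h2.1], h2.2, h1.2⟩
  · rintro (⟨h1, h2, h3⟩ | ⟨h1, h2, h3⟩)
    · exact ⟨x.1, y.1, (succ_val_iff' hn).mpr h1,
        by rw [Sym2.eq_iff]; left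
           exact ⟨Prod.ext_iff.mpr ⟨rfl, h2⟩, Prod.ext_iff.mpr ⟨by rw [h1], h3⟩⟩⟩
    · exact ⟨y.1, x.1, (succ_val_iff' hn).mpr h1,
        by rw [Sym2.eq_iff]; right
           exact ⟨Prod.ext_iff.mpr ⟨by rw [h1], h3⟩, Prod.ext_iff.mpr ⟨rfl, h2⟩⟩⟩

lemma mem_leftSet_iff {x y : Fin n × Fin 4} :
    s(x, y) ∈ leftSet n ↔
      (x.1 = y.1 + 1 ∧ x.2 = 1 ∧ y.2 = 2) ∨ (y.1 = x.1 + 1 ∧ x.2 = 2 ∧ y.2 = 1) := by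
  constructor
  · rintro ⟨i, j, hj, he⟩
    rw [succ_val_iff' hn] at hj
    subst hj
    rcases Sym2.eq_iff.mp he with ⟨h1, h2⟩ | ⟨h1, h2⟩ <;>
      rw [Prod.ext_iff] at h1 h2 <;> simp only [] at h1 h2
    · exact Or.inl ⟨by rw [h1.1, h2.1], h1.2, h2.2⟩
    · exact Or.inr ⟨by rw [h2.1, h1.1], h1.2, h2.2⟩
  · rintro (⟨h1, h2, h3⟩ | ⟨h1, h2, h3⟩)
    · exact ⟨y.1, x.1, (succ_val_iff' hn).mpr h1,
        by rw [Sym2.eq_iff]; left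
           exact ⟨Prod.ext_iff.mpr ⟨by rw [h1], h2⟩, Prod.ext_iff.mpr ⟨rfl, h3⟩⟩⟩
    · exact ⟨x.1, y.1, (succ_val_iff' hn).mpr h1,
        by rw [Sym2.eq_iff]; right
           exact ⟨Prod.ext_iff.mpr ⟨rfl, h2⟩, Prod.ext_iff.mpr ⟨by rw [h1], h3⟩⟩⟩

/-! ### small-offset cast lemmas -/

lemma cast_eq_iff {base : Fin n} {q q' : ℕ} (hq : q ≤ 7) (hq' : q' ≤ 7) :
    base + (q' : Fin n) = base + (q : Fin n) ↔ q' = q := by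
  rw [add_right_inj, Fin.ext_iff, Fin.val_natCast, Fin.val_natCast,
    Nat.mod_eq_of_lt (by omega), Nat.mod_eq_of_lt (by omega)]

lemma cast_succ_iff {base : Fin n} {q q' : ℕ} (hq : q ≤ 6) (hq' : q' ≤ 7) :
    base + (q' : Fin n) = base + (q : Fin n) + 1 ↔ q' = q + 1 := by
  rw [add_assoc, show ((q : Fin n) + 1 : Fin n) = ((q + 1 : ℕ) : Fin n) by push_cast; ring,
    cast_eq_iff hn (by omega) hq']

lemma pair_eq_iff {base : Fin n} {q q' : ℕ} (hq : q ≤ 7) (hq' : q' ≤ 7) {r r' : Fin 4}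
    {x y : Fin n × Fin 4} (hx : x.1 = base + (q : Fin n)) (hy : y.1 = base + (q' : Fin n))
    (hr : x.2 = r) (hr' : y.2 = r') :
    x = y ↔ ((q : ℕ), r) = ((q' : ℕ), r') := by
  rw [Prod.ext_iff, Prod.ext_iff, hx, hy, hr, hr', cast_eq_iff hn hq' hq]

end Aux

lemma prop_helper {A A' B B' C C' D D' : Prop} (hA : A ↔ A') (hB : B ↔ B') (hC : C ↔ C')
    (hD : D ↔ D') : ((A ∧ (B ∨ C)) ∨ (D ∧ A)) ↔ (A' ∧ (B' ∨ C' ∨ D')) := by tauto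

section Aux2
variable {n : ℕ} [NeZero n] (hn : 8 ≤ n)
include hn

lemma transfer (dir : Bool) {base : Fin n} {q q' : ℕ} (hq : q ≤ 6) (hq' : q' ≤ 6)
    {x y : Fin n × Fin 4} (hx : x.1 = base + (q : Fin n)) (hy : y.1 = base + (q' : Fin n)) :
    (Hg n dir).Adj x y ↔ aadjN dir (q, x.2) (q', y.2) := by
  have hxy : (x = y) ↔ (((q : ℕ), x.2) = ((q' : ℕ), y.2)) :=
    pair_eq_iff hn (by omega) (by omega) hx hy rfl rfl
  have A1 : y.1 = x.1 ↔ q' = q := by rw [hx, hy, cast_eq_iff hn (by omega) (by omega)]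
  have A1' : x.1 = y.1 ↔ q = q' := by rw [hx, hy, cast_eq_iff hn (by omega) (by omega)]
  have A2 : y.1 = x.1 + 1 ↔ q' = q + 1 := by rw [hx, hy, cast_succ_iff hn (by omega) (by omega)]
  have A3 : x.1 = y.1 + 1 ↔ q = q' + 1 := by rw [hx, hy, cast_succ_iff hn (by omega) (by omega)]
  cases dir
  · rw [Hg, sup_adj, tape_adj_iff hn, chordSet, fromEdgeSet_adj, mem_leftSet_iff hn]
    refine prop_helper (not_congr hxy) ?_ ?_ ?_ <;>
      simp only [relF, relN, chordN] <;>
      exact or_congr (and_congr_left fun _ => by assumption)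
        (and_congr_left fun _ => by assumption)
  · rw [Hg, sup_adj, tape_adj_iff hn, chordSet, fromEdgeSet_adj, mem_rightSet_iff hn]
    refine prop_helper (not_congr hxy) ?_ ?_ ?_ <;>
      simp only [relF, relN, chordN] <;>
      exact or_congr (and_congr_left fun _ => by assumption)
        (and_congr_left fun _ => by assumption)

end Aux2

section Aux3
variable {n : ℕ} [NeZero n] (hn : 8 ≤ n)
include hn

lemma adj_step {dir : Bool} {x y : Fin n × Fin 4} (h : (Hg n dir).Adj x y) :
    y.1 = x.1 ∨ y.1 = x.1 + 1 ∨ x.1 = y.1 + 1 := by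
  rw [Hg, sup_adj, tape_adj_iff hn, fromEdgeSet_adj] at h
  rcases h with ⟨-, h | h⟩ | ⟨h, -⟩
  · rcases h with ⟨h, -⟩ | ⟨h, -⟩
    · exact Or.inl h
    · exact Or.inr (Or.inl h)
  · rcases h with ⟨h, -⟩ | ⟨h, -⟩
    · exact Or.inl h.symm
    · exact Or.inr (Or.inr h)
  · cases dir
    · rw [chordSet, mem_leftSet_iff hn] at h
      rcases h with ⟨h, -⟩ | ⟨h, -⟩
      · exact Or.inr (Or.inr h)
      · exact Or.inr (Or.inl h)
    · rw [chordSet, mem_rightSet_iff hn] at h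
      rcases h with ⟨h, -⟩ | ⟨h, -⟩
      · exact Or.inr (Or.inl h)
      · exact Or.inr (Or.inr h)

lemma offset_step {dir : Bool} {base : Fin n} {x y : Fin n × Fin 4} {q : ℕ}
    (h1 : 1 ≤ q) (h5 : q ≤ 5) (hx : x.1 = base + (q : Fin n)) (h : (Hg n dir).Adj x y) :
    ∃ q' : ℕ, (q - 1 ≤ q' ∧ q' ≤ q + 1) ∧ y.1 = base + (q' : Fin n) := by
  rcases adj_step hn h with h' | h' | h'
  · exact ⟨q, ⟨by omega, by omega⟩, by rw [h', hx]⟩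
  · refine ⟨q + 1, ⟨by omega, by omega⟩, ?_⟩
    rw [h', hx, Nat.cast_add, Nat.cast_one, add_assoc]
  · refine ⟨q - 1, ⟨by omega, by omega⟩, ?_⟩
    have : y.1 = x.1 - 1 := by rw [h']; ring
    rw [this, hx, Nat.cast_sub h1, Nat.cast_one, add_sub_assoc]

end Aux3

section NoC4
variable {n : ℕ} [NeZero n] (hn : 8 ≤ n)
include hn

lemma noC4 (dir : Bool) : IsEmpty (SimpleGraph.cycleGraph 4 ↪g Hg n dir) := by
  constructor
  intro f
  have e01 : (Hg n dir).Adj (f 0) (f 1) := f.map_rel_iff.mpr (by decide)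
  have e12 : (Hg n dir).Adj (f 1) (f 2) := f.map_rel_iff.mpr (by decide)
  have e23 : (Hg n dir).Adj (f 2) (f 3) := f.map_rel_iff.mpr (by decide)
  have e30 : (Hg n dir).Adj (f 3) (f 0) := f.map_rel_iff.mpr (by decide)
  have n02 : ¬ (Hg n dir).Adj (f 0) (f 2) := fun h => by
    have := f.map_rel_iff.mp h; revert this; decide
  have n13 : ¬ (Hg n dir).Adj (f 1) (f 3) := fun h => by
    have := f.map_rel_iff.mp h; revert this; decide
  have d02 : f 0 ≠ f 2 := fun h => by have := f.injective h; revert this; decide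
  have d13 : f 1 ≠ f 3 := fun h => by have := f.injective h; revert this; decide
  set base : Fin n := (f 0).1 - ((3 : ℕ) : Fin n) with hbase
  have h0 : (f 0).1 = base + ((3 : ℕ) : Fin n) := by rw [hbase, sub_add_cancel]
  obtain ⟨q1, hb1, h1⟩ := offset_step hn (by omega) (by omega) h0 e01
  obtain ⟨q2, hb2, h2⟩ := offset_step hn (by omega) (by omega) h1 e12
  obtain ⟨q3, hb3, h3⟩ := offset_step hn (by omega) (by omega) h2 e23
  -- abstract facts
  have a01 : aadjN dir (3, (f 0).2) (q1, (f 1).2) :=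
    (transfer hn dir (by omega) (by omega) h0 h1).mp e01
  have a12 : aadjN dir (q1, (f 1).2) (q2, (f 2).2) :=
    (transfer hn dir (by omega) (by omega) h1 h2).mp e12
  have a23 : aadjN dir (q2, (f 2).2) (q3, (f 3).2) :=
    (transfer hn dir (by omega) (by omega) h2 h3).mp e23
  have a30 : aadjN dir (q3, (f 3).2) (3, (f 0).2) :=
    (transfer hn dir (by omega) (by omega) h3 h0).mp e30
  have na02 : ¬ aadjN dir (3, (f 0).2) (q2, (f 2).2) :=
    fun h => n02 ((transfer hn dir (by omega) (by omega) h0 h2).mpr h)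
  have na13 : ¬ aadjN dir (q1, (f 1).2) (q3, (f 3).2) :=
    fun h => n13 ((transfer hn dir (by omega) (by omega) h1 h3).mpr h)
  have nd02 : ((3 : ℕ), (f 0).2) ≠ ((q2 : ℕ), (f 2).2) :=
    fun h => d02 ((pair_eq_iff hn (by omega) (by omega) h0 h2 rfl rfl).mpr h)
  have nd13 : ((q1 : ℕ), (f 1).2) ≠ ((q3 : ℕ), (f 3).2) :=
    fun h => d13 ((pair_eq_iff hn (by omega) (by omega) h1 h3 rfl rfl).mpr h)
  have hq1 : 2 ≤ q1 ∧ q1 ≤ 4 := by omega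
  have hq2 : 1 ≤ q2 ∧ q2 ≤ 5 := by omega
  have hq3 : q3 ≤ 6 := by omega
  obtain ⟨w1, hw1⟩ : ∃ w1 : Fin 3, q1 = (w1 : ℕ) + 2 := ⟨⟨q1 - 2, by omega⟩, by simp; omega⟩
  obtain ⟨w2, hw2⟩ : ∃ w2 : Fin 5, q2 = (w2 : ℕ) + 1 := ⟨⟨q2 - 1, by omega⟩, by simp; omega⟩
  obtain ⟨w3, hw3⟩ : ∃ w3 : Fin 7, q3 = (w3 : ℕ) := ⟨⟨q3, by omega⟩, rfl⟩
  subst hw1 hw2 hw3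
  exact abs_noC4 dir (f 0).2 (w1, (f 1).2) (w2, (f 2).2) (w3, (f 3).2)
    a01 a12 a23 a30 nd02 nd13 na02 na13

end NoC4

lemma mk_c4 {V : Type*} {H : SimpleGraph V} (x0 x1 x2 x3 : V)
    (e01 : H.Adj x0 x1) (e12 : H.Adj x1 x2) (e23 : H.Adj x2 x3) (e30 : H.Adj x3 x0)
    (n02 : ¬ H.Adj x0 x2) (n13 : ¬ H.Adj x1 x3)
    (d02 : x0 ≠ x2) (d13 : x1 ≠ x3) :
    Nonempty (SimpleGraph.cycleGraph 4 ↪g H) := by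
  have d01 : x0 ≠ x1 := e01.ne
  have d12 : x1 ≠ x2 := e12.ne
  have d23 : x2 ≠ x3 := e23.ne
  have d03 : x0 ≠ x3 := e30.ne'
  refine ⟨⟨⟨![x0, x1, x2, x3], ?_⟩, ?_⟩⟩
  · intro a b h
    fin_cases a <;> fin_cases b <;>
      first
      | rfl
      | exact absurd h d01 | exact absurd h.symm d01
      | exact absurd h d02 | exact absurd h.symm d02
      | exact absurd h d03 | exact absurd h.symm d03
      | exact absurd h d12 | exact absurd h.symm d12
      | exact absurd h d13 | exact absurd h.symm d13
      | exact absurd h d23 | exact absurd h.symm d23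
  · intro a b
    fin_cases a <;> fin_cases b <;>
      first
      | exact iff_of_false (H.loopless.irrefl _) (by decide)
      | exact iff_of_true e01 (by decide)
      | exact iff_of_true e01.symm (by decide)
      | exact iff_of_true e12 (by decide)
      | exact iff_of_true e12.symm (by decide)
      | exact iff_of_true e23 (by decide)
      | exact iff_of_true e23.symm (by decide)
      | exact iff_of_true e30 (by decide)
      | exact iff_of_true e30.symm (by decide)
      | exact iff_of_false n02 (by decide)
      | exact iff_of_false (fun h => n02 h.symm) (by decide)
      | exact iff_of_false n13 (by decide)
      | exact iff_of_false (fun h => n13 h.symm) (by decide)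

section LB
variable {n : ℕ} [NeZero n] (hn : 8 ≤ n)
include hn

lemma fin_shift_iff {i : Fin n} {a b : ℕ} (ha : a ≤ 7) (hb : b ≤ 7) :
    i + (a : Fin n) = i + (b : Fin n) ↔ a = b := cast_eq_iff hn hb ha

lemma fin_ne_add_one (i : Fin n) : i ≠ i + 1 := by
  intro h
  have h' : i + ((0 : ℕ) : Fin n) = i + ((1 : ℕ) : Fin n) := by push_cast; simpa using h
  exact absurd ((fin_shift_iff hn (by omega) (by omega)).mp h') (by omega)

lemma fin_ne_add_two (i : Fin n) : i ≠ i + 2 := by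
  intro h
  have h' : i + ((0 : ℕ) : Fin n) = i + ((2 : ℕ) : Fin n) := by push_cast; simpa using h
  exact absurd ((fin_shift_iff hn (by omega) (by omega)).mp h') (by omega)

lemma tape_transfer {base : Fin n} {q q' : ℕ} (hq : q ≤ 6) (hq' : q' ≤ 6)
    {x y : Fin n × Fin 4} (hx : x.1 = base + (q : Fin n)) (hy : y.1 = base + (q' : Fin n)) :
    (tape n).Adj x y ↔
      ((q, x.2) ≠ ((q' : ℕ), y.2) ∧ (relN (q, x.2) (q', y.2) ∨ relN (q', y.2) (q, x.2))) := by
  have hxy : (x = y) ↔ (((q : ℕ), x.2) = ((q' : ℕ), y.2)) :=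
    pair_eq_iff hn (by omega) (by omega) hx hy rfl rfl
  have A1 : y.1 = x.1 ↔ q' = q := by rw [hx, hy, cast_eq_iff hn (by omega) (by omega)]
  have A1' : x.1 = y.1 ↔ q = q' := by rw [hx, hy, cast_eq_iff hn (by omega) (by omega)]
  have A2 : y.1 = x.1 + 1 ↔ q' = q + 1 := by rw [hx, hy, cast_succ_iff hn (by omega) (by omega)]
  have A3 : x.1 = y.1 + 1 ↔ q = q' + 1 := by rw [hx, hy, cast_succ_iff hn (by omega) (by omega)]
  rw [tape_adj_iff hn]
  exact and_congr (not_congr hxy)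
    (or_congr
      (by simp only [relF, relN]
          exact or_congr (and_congr_left fun _ => A1) (and_congr_left fun _ => A2))
      (by simp only [relF, relN]
          exact or_congr (and_congr_left fun _ => A1') (and_congr_left fun _ => A3)))

end LB

section LB2
variable {n : ℕ} [NeZero n] (hn : 8 ≤ n) {S : Set (Sym2 (Fin n × Fin 4))}

lemma cast0 (i : Fin n) : i + ((0 : ℕ) : Fin n) = i := by norm_num
lemma cast1 (i : Fin n) : i + ((1 : ℕ) : Fin n) = i + 1 := by norm_num
lemma cast2 (i : Fin n) : i + ((2 : ℕ) : Fin n) = i + 2 := by norm_num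

include hn

lemma tape_adj_off {i : Fin n} {r r' : Fin 4} {a b : ℕ} (ha : a ≤ 6) (hb : b ≤ 6) :
    (tape n).Adj (i + (a : Fin n), r) (i + (b : Fin n), r') ↔
      (((a : ℕ), r) ≠ ((b : ℕ), r') ∧ (relN (a, r) (b, r') ∨ relN (b, r') (a, r))) :=
  tape_transfer hn ha hb rfl rfl

lemma pair_ne_off {i : Fin n} {r r' : Fin 4} {a b : ℕ} (ha : a ≤ 6) (hb : b ≤ 6) :
    ((i + (a : Fin n), r) = (i + (b : Fin n), r')) ↔ (((a : ℕ), r) = ((b : ℕ), r')) :=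
  pair_eq_iff hn (by omega) (by omega) rfl rfl rfl rfl

/-- All nine `tape`-adjacency / non-adjacency facts we need in a window, plus
pair-distinctness, phrased through offsets: decidable goal after transfer. -/
lemma tape_adj_off' {i : Fin n} {r r' : Fin 4} {a b : ℕ} (ha : a ≤ 6) (hb : b ≤ 6)
    (h : (((a : ℕ), r) ≠ ((b : ℕ), r') ∧ (relN (a, r) (b, r') ∨ relN (b, r') (a, r)))) :
    (tape n).Adj (i + (a : Fin n), r) (i + (b : Fin n), r') :=
  (tape_adj_off hn ha hb).mpr h

lemma chord_dichotomy (hdisj : Disjoint S (tape n).edgeSet)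
    (hfree : IsEmpty (SimpleGraph.cycleGraph 4 ↪g (tape n ⊔ fromEdgeSet S))) (i : Fin n) :
    s((i, (1 : Fin 4)), (i + 1, (2 : Fin 4))) ∈ S ∨
      s((i + 1, (1 : Fin 4)), (i, (2 : Fin 4))) ∈ S := by
  by_contra hcon
  push_neg at hcon
  have c0 := cast0 i; have c1 := cast1 i
  have E1 : (tape n).Adj (i, 1) (i + 1, 1) := by
    have := tape_adj_off' hn (i := i) (r := 1) (r' := 1) (a := 0) (b := 1)
      (by omega) (by omega) (by decide)
    rwa [c0, c1] at this
  have E2 : (tape n).Adj (i + 1, 1) (i + 1, 2) := by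
    have := tape_adj_off' hn (i := i) (r := 1) (r' := 2) (a := 1) (b := 1)
      (by omega) (by omega) (by decide)
    rwa [c1] at this
  have E3 : (tape n).Adj (i + 1, 2) (i, 2) := by
    have := tape_adj_off' hn (i := i) (r := 2) (r' := 2) (a := 1) (b := 0)
      (by omega) (by omega) (by decide)
    rwa [c0, c1] at this
  have E4 : (tape n).Adj (i, 2) (i, 1) := by
    have := tape_adj_off' hn (i := i) (r := 2) (r' := 1) (a := 0) (b := 0)
      (by omega) (by omega) (by decide)
    rwa [c0] at this
  have N1 : ¬ (tape n).Adj (i, 1) (i + 1, 2) := by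
    have := (tape_adj_off hn (i := i) (r := 1) (r' := 2) (a := 0) (b := 1)
      (by omega) (by omega))
    rw [c0, c1] at this
    rw [this]; decide
  have N2 : ¬ (tape n).Adj (i + 1, 1) (i, 2) := by
    have := (tape_adj_off hn (i := i) (r := 1) (r' := 2) (a := 1) (b := 0)
      (by omega) (by omega))
    rw [c0, c1] at this
    rw [this]; decide
  have D1 : ((i, (1 : Fin 4)) : Fin n × Fin 4) ≠ (i + 1, 2) := by
    have := (pair_ne_off hn (i := i) (r := 1) (r' := 2) (a := 0) (b := 1) (by omega) (by omega))
    rw [c0, c1] at this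
    rw [Ne, this]; decide
  have D2 : ((i + 1, (1 : Fin 4)) : Fin n × Fin 4) ≠ (i, 2) := by
    have := (pair_ne_off hn (i := i) (r := 1) (r' := 2) (a := 1) (b := 0) (by omega) (by omega))
    rw [c0, c1] at this
    rw [Ne, this]; decide
  obtain ⟨f⟩ := mk_c4 (H := tape n ⊔ fromEdgeSet S) (i, 1) (i + 1, 1) (i + 1, 2) (i, 2)
    (Or.inl E1) (Or.inl E2) (Or.inl E3) (Or.inl E4)
    (by rw [sup_adj, fromEdgeSet_adj]; push_neg; exact ⟨N1, fun hm => absurd hm hcon.1⟩)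
    (by rw [sup_adj, fromEdgeSet_adj]; push_neg; exact ⟨N2, fun hm => absurd hm hcon.2⟩)
    D1 D2
  exact hfree.false f

end LB2

section Chords
variable {n : ℕ} [NeZero n]

def rightC (i : Fin n) : Sym2 (Fin n × Fin 4) := s((i, (1 : Fin 4)), (i + 1, (2 : Fin 4)))
def leftC (i : Fin n) : Sym2 (Fin n × Fin 4) := s((i + 1, (1 : Fin 4)), (i, (2 : Fin 4)))

variable (hn : 8 ≤ n)

lemma rightC_inj {i j : Fin n} (h : rightC i = rightC j) : i = j := by
  rcases Sym2.eq_iff.mp h with ⟨h1, h2⟩ | ⟨h1, h2⟩ <;> rw [Prod.ext_iff] at h1 h2 <;>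
      simp only [] at h1 h2
  · exact h1.1
  · exact absurd h1.2 (by decide)

lemma leftC_inj {i j : Fin n} (h : leftC i = leftC j) : i = j := by
  rcases Sym2.eq_iff.mp h with ⟨h1, h2⟩ | ⟨h1, h2⟩ <;> rw [Prod.ext_iff] at h1 h2 <;>
      simp only [] at h1 h2
  · exact h2.1
  · exact absurd h1.2 (by decide)

include hn

lemma rightC_ne_leftC {i j : Fin n} : rightC i ≠ leftC j := by
  intro h
  rcases Sym2.eq_iff.mp h with ⟨h1, h2⟩ | ⟨h1, h2⟩ <;> rw [Prod.ext_iff] at h1 h2 <;>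
      simp only [] at h1 h2
  · -- i = j + 1 and i + 1 = j, so i = i + 2
    have hij : i = j + 1 := h1.1
    have hji : i + 1 = j := h2.1
    rw [← hji] at hij
    have : i = i + 2 := by
      calc i = (i + 1) + 1 := hij
        _ = i + 2 := by ring
    exact absurd this (fin_ne_add_two hn i)
  · exact absurd h1.2 (by decide)

end Chords

section Gsel
variable {n : ℕ} [NeZero n] (hn : 8 ≤ n) (S : Set (Sym2 (Fin n × Fin 4)))

noncomputable def gsel : Fin n → Sym2 (Fin n × Fin 4) := fun i =>
  @ite _ (rightC i ∈ S) (Classical.dec _) (rightC i) (leftC i)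

variable {S}
include hn

lemma gsel_mem
    (hfree : IsEmpty (SimpleGraph.cycleGraph 4 ↪g (tape n ⊔ fromEdgeSet S)))
    (hdisj : Disjoint S (tape n).edgeSet) (i : Fin n) : gsel S i ∈ S := by
  simp only [gsel]
  split_ifs with h
  · exact h
  · rcases chord_dichotomy hn hdisj hfree i with h' | h'
    · exact absurd h' h
    · exact h'

lemma gsel_inj : Function.Injective (gsel S) := by
  intro i j h
  simp only [gsel] at h
  split_ifs at h with h1 h2 h2
  · exact rightC_inj h
  · exact absurd h (rightC_ne_leftC hn)
  · exact absurd h.symm (rightC_ne_leftC hn)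
  · exact leftC_inj h

lemma ncard_range_gsel : (Set.range (gsel S)).ncard = n := by
  rw [← Set.image_univ, Set.ncard_image_of_injective _ (gsel_inj hn), Set.ncard_univ,
    Nat.card_eq_fintype_card, Fintype.card_fin]

lemma lower_bound
    (hfree : IsEmpty (SimpleGraph.cycleGraph 4 ↪g (tape n ⊔ fromEdgeSet S)))
    (hdisj : Disjoint S (tape n).edgeSet) : n ≤ S.ncard := by
  have hsub : Set.range (gsel S) ⊆ S := by
    rintro e ⟨i, rfl⟩
    exact gsel_mem hn hfree hdisj i
  exact le_trans (le_of_eq (ncard_range_gsel hn (S := S)).symm)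
    (Set.ncard_le_ncard hsub S.toFinite)

lemma range_eq
    (hfree : IsEmpty (SimpleGraph.cycleGraph 4 ↪g (tape n ⊔ fromEdgeSet S)))
    (hdisj : Disjoint S (tape n).edgeSet) (hcard : S.ncard = n) :
    S = Set.range (gsel S) := by
  have hsub : Set.range (gsel S) ⊆ S := by
    rintro e ⟨i, rfl⟩
    exact gsel_mem hn hfree hdisj i
  exact (Set.eq_of_subset_of_ncard_le hsub
    (by rw [hcard, ncard_range_gsel hn]) S.toFinite).symm

lemma mem_char
    (hfree : IsEmpty (SimpleGraph.cycleGraph 4 ↪g (tape n ⊔ fromEdgeSet S)))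
    (hdisj : Disjoint S (tape n).edgeSet) (hcard : S.ncard = n) :
    ∀ e ∈ S, ∃ j : Fin n, e = rightC j ∨ e = leftC j := by
  intro e he
  rw [range_eq hn hfree hdisj hcard] at he
  obtain ⟨j, rfl⟩ := he
  refine ⟨j, ?_⟩
  simp only [gsel]
  split_ifs
  · exact Or.inl rfl
  · exact Or.inr rfl

lemma row_not_mem (hrange : ∀ e ∈ S, ∃ j : Fin n, e = rightC j ∨ e = leftC j)
    {x y : Fin n × Fin 4} (h1 : ¬(x.2 = 1 ∧ y.2 = 2)) (h2 : ¬(x.2 = 2 ∧ y.2 = 1)) :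
    s(x, y) ∉ S := by
  intro hm
  obtain ⟨j, hc | hc⟩ := hrange _ hm <;>
    rcases Sym2.eq_iff.mp hc with ⟨ha, hb⟩ | ⟨ha, hb⟩ <;> rw [Prod.ext_iff] at ha hb <;>
    simp only [] at ha hb
  · exact h1 ⟨ha.2, hb.2⟩
  · exact h2 ⟨ha.2, hb.2⟩
  · exact h1 ⟨ha.2, hb.2⟩
  · exact h2 ⟨ha.2, hb.2⟩

end Gsel

section Flip
variable {n : ℕ} [NeZero n] (hn : 8 ≤ n) {S : Set (Sym2 (Fin n × Fin 4))}
include hn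

lemma flip1 (hfree : IsEmpty (SimpleGraph.cycleGraph 4 ↪g (tape n ⊔ fromEdgeSet S)))
    (hrange : ∀ e ∈ S, ∃ j : Fin n, e = rightC j ∨ e = leftC j) (i : Fin n)
    (h1 : rightC i ∈ S) (h2 : leftC (i + 1) ∈ S) : False := by
  have c0 := cast0 i; have c1 := cast1 i; have c2 := cast2 i
  have h12 : (i + 1) + 1 = i + 2 := by ring
  -- C4 : (i,1) - (i+1,0) - (i+2,1) - (i+1,2) - (i,1)
  have E1 : (tape n).Adj (i, 1) (i + 1, 0) := by
    have := tape_adj_off' hn (i := i) (r := 1) (r' := 0) (a := 0) (b := 1)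
      (by omega) (by omega) (by decide)
    rwa [c0, c1] at this
  have E2 : (tape n).Adj (i + 1, 0) (i + 2, 1) := by
    have := tape_adj_off' hn (i := i) (r := 0) (r' := 1) (a := 1) (b := 2)
      (by omega) (by omega) (by decide)
    rwa [c1, c2] at this
  have M23 : s(((i + 2 : Fin n), (1 : Fin 4)), ((i + 1 : Fin n), (2 : Fin 4))) ∈ S := by
    rw [leftC, h12] at h2
    exact h2
  have M30 : s(((i + 1 : Fin n), (2 : Fin 4)), ((i : Fin n), (1 : Fin 4))) ∈ S := by
    rw [rightC] at h1
    rwa [Sym2.eq_swap]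
  have D23 : ((i + 2, (1 : Fin 4)) : Fin n × Fin 4) ≠ (i + 1, 2) := by
    have := pair_ne_off hn (i := i) (r := 1) (r' := 2) (a := 2) (b := 1) (by omega) (by omega)
    rw [c1, c2] at this
    rw [Ne, this]; decide
  have D30 : ((i + 1, (2 : Fin 4)) : Fin n × Fin 4) ≠ (i, 1) := by
    have := pair_ne_off hn (i := i) (r := 2) (r' := 1) (a := 1) (b := 0) (by omega) (by omega)
    rw [c0, c1] at this
    rw [Ne, this]; decide
  have N02 : ¬ (tape n).Adj (i, 1) (i + 2, 1) := by
    have := tape_adj_off hn (i := i) (r := 1) (r' := 1) (a := 0) (b := 2) (by omega) (by omega)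
    rw [c0, c2] at this
    rw [this]; decide
  have N13 : ¬ (tape n).Adj (i + 1, 0) (i + 1, 2) := by
    have := tape_adj_off hn (i := i) (r := 0) (r' := 2) (a := 1) (b := 1) (by omega) (by omega)
    rw [c1] at this
    rw [this]; decide
  have D02 : ((i, (1 : Fin 4)) : Fin n × Fin 4) ≠ (i + 2, 1) := by
    have := pair_ne_off hn (i := i) (r := 1) (r' := 1) (a := 0) (b := 2) (by omega) (by omega)
    rw [c0, c2] at this
    rw [Ne, this]; decide
  have D13 : ((i + 1, (0 : Fin 4)) : Fin n × Fin 4) ≠ (i + 1, 2) := by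
    have := pair_ne_off hn (i := i) (r := 0) (r' := 2) (a := 1) (b := 1) (by omega) (by omega)
    rw [c1] at this
    rw [Ne, this]; decide
  obtain ⟨f⟩ := mk_c4 (H := tape n ⊔ fromEdgeSet S) (i, 1) (i + 1, 0) (i + 2, 1) (i + 1, 2)
    (Or.inl E1) (Or.inl E2) (Or.inr ⟨M23, D23⟩) (Or.inr ⟨M30, D30⟩)
    (by rw [sup_adj, fromEdgeSet_adj]; push_neg
        exact ⟨N02, fun hm => absurd hm (row_not_mem hn hrange (by simp) (by simp))⟩)
    (by rw [sup_adj, fromEdgeSet_adj]; push_neg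
        exact ⟨N13, fun hm => absurd hm (row_not_mem hn hrange (by simp) (by simp))⟩)
    D02 D13
  exact hfree.false f

lemma flip2 (hfree : IsEmpty (SimpleGraph.cycleGraph 4 ↪g (tape n ⊔ fromEdgeSet S)))
    (hrange : ∀ e ∈ S, ∃ j : Fin n, e = rightC j ∨ e = leftC j) (i : Fin n)
    (h1 : leftC i ∈ S) (h2 : rightC (i + 1) ∈ S) : False := by
  have c0 := cast0 i; have c1 := cast1 i; have c2 := cast2 i
  have h12 : (i + 1) + 1 = i + 2 := by ring
  -- C4 : (i,2) - (i+1,1) - (i+2,2) - (i+1,3) - (i,2)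
  have M01 : s(((i : Fin n), (2 : Fin 4)), ((i + 1 : Fin n), (1 : Fin 4))) ∈ S := by
    rw [leftC] at h1
    rwa [Sym2.eq_swap]
  have M12 : s(((i + 1 : Fin n), (1 : Fin 4)), ((i + 2 : Fin n), (2 : Fin 4))) ∈ S := by
    rw [rightC, h12] at h2
    exact h2
  have D01 : ((i, (2 : Fin 4)) : Fin n × Fin 4) ≠ (i + 1, 1) := by
    have := pair_ne_off hn (i := i) (r := 2) (r' := 1) (a := 0) (b := 1) (by omega) (by omega)
    rw [c0, c1] at this
    rw [Ne, this]; decide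
  have D12 : ((i + 1, (1 : Fin 4)) : Fin n × Fin 4) ≠ (i + 2, 2) := by
    have := pair_ne_off hn (i := i) (r := 1) (r' := 2) (a := 1) (b := 2) (by omega) (by omega)
    rw [c1, c2] at this
    rw [Ne, this]; decide
  have E2 : (tape n).Adj (i + 2, 2) (i + 1, 3) := by
    have := tape_adj_off' hn (i := i) (r := 2) (r' := 3) (a := 2) (b := 1)
      (by omega) (by omega) (by decide)
    rwa [c1, c2] at this
  have E3 : (tape n).Adj (i + 1, 3) (i, 2) := by
    have := tape_adj_off' hn (i := i) (r := 3) (r' := 2) (a := 1) (b := 0)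
      (by omega) (by omega) (by decide)
    rwa [c0, c1] at this
  have N02 : ¬ (tape n).Adj (i, 2) (i + 2, 2) := by
    have := tape_adj_off hn (i := i) (r := 2) (r' := 2) (a := 0) (b := 2) (by omega) (by omega)
    rw [c0, c2] at this
    rw [this]; decide
  have N13 : ¬ (tape n).Adj (i + 1, 1) (i + 1, 3) := by
    have := tape_adj_off hn (i := i) (r := 1) (r' := 3) (a := 1) (b := 1) (by omega) (by omega)
    rw [c1] at this
    rw [this]; decide
  have D02 : ((i, (2 : Fin 4)) : Fin n × Fin 4) ≠ (i + 2, 2) := by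
    have := pair_ne_off hn (i := i) (r := 2) (r' := 2) (a := 0) (b := 2) (by omega) (by omega)
    rw [c0, c2] at this
    rw [Ne, this]; decide
  have D13 : ((i + 1, (1 : Fin 4)) : Fin n × Fin 4) ≠ (i + 1, 3) := by
    have := pair_ne_off hn (i := i) (r := 1) (r' := 3) (a := 1) (b := 1) (by omega) (by omega)
    rw [c1] at this
    rw [Ne, this]; decide
  obtain ⟨f⟩ := mk_c4 (H := tape n ⊔ fromEdgeSet S) (i, 2) (i + 1, 1) (i + 2, 2) (i + 1, 3)
    (Or.inr ⟨M01, D01⟩) (Or.inr ⟨M12, D12⟩) (Or.inl E2) (Or.inl E3)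
    (by rw [sup_adj, fromEdgeSet_adj]; push_neg
        exact ⟨N02, fun hm => absurd hm (row_not_mem hn hrange (by simp) (by simp))⟩)
    (by rw [sup_adj, fromEdgeSet_adj]; push_neg
        exact ⟨N13, fun hm => absurd hm (row_not_mem hn hrange (by simp) (by simp))⟩)
    D02 D13
  exact hfree.false f

end Flip

section Char
variable {n : ℕ} [NeZero n] (hn : 8 ≤ n) {S : Set (Sym2 (Fin n × Fin 4))}
include hn

lemma S_char (hfree : IsEmpty (SimpleGraph.cycleGraph 4 ↪g (tape n ⊔ fromEdgeSet S)))
    (hdisj : Disjoint S (tape n).edgeSet) (hcard : S.ncard = n) :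
    S = rightSet n ∨ S = leftSet n := by
  have hrange := mem_char hn hfree hdisj hcard
  have key : ∀ i : Fin n, rightC i ∈ S ↔ rightC (i + 1) ∈ S := by
    intro i
    constructor
    · intro h
      by_contra h'
      exact flip1 hn hfree hrange i h
        ((chord_dichotomy hn hdisj hfree (i + 1)).resolve_left h')
    · intro h
      by_contra h'
      exact flip2 hn hfree hrange i
        ((chord_dichotomy hn hdisj hfree i).resolve_left h') h
  have key2 : ∀ k : ℕ, (rightC ((0 : Fin n) + (k : Fin n)) ∈ S ↔ rightC 0 ∈ S) := by
    intro k
    induction k with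
    | zero => rw [show ((0 : Fin n) + ((0 : ℕ) : Fin n)) = 0 from by norm_num]
    | succ k ih =>
      rw [show ((0 : Fin n) + ((k + 1 : ℕ) : Fin n)) = ((0 : Fin n) + (k : Fin n)) + 1 from by
        push_cast; ring]
      exact (key _).symm.trans ih
  have keyAll : ∀ i : Fin n, (rightC i ∈ S ↔ rightC 0 ∈ S) := by
    intro i
    have hi : ((0 : Fin n) + ((i : ℕ) : Fin n)) = i := by
      rw [Fin.cast_val_eq_self, zero_add]
    have := key2 (i : ℕ)
    rwa [hi] at this
  rcases em (rightC 0 ∈ S) with h0 | h0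
  · left
    have hall : ∀ i, rightC i ∈ S := fun i => (keyAll i).mpr h0
    ext e
    constructor
    · intro he
      obtain ⟨j, hj | hj⟩ := hrange e he
      · rw [hj]
        exact ⟨j, j + 1, (succ_val_iff' hn).mpr rfl, rfl⟩
      · exact absurd (hall (j + 1)) (fun hr => flip2 hn hfree hrange j (hj ▸ he) hr)
    · rintro ⟨i, j, hji, rfl⟩
      rw [succ_val_iff' hn] at hji
      subst hji
      exact hall i
  · right
    have hnall : ∀ i, rightC i ∉ S := fun i h => h0 ((keyAll i).mp h)
    have hall : ∀ i, leftC i ∈ S :=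
      fun i => (chord_dichotomy hn hdisj hfree i).resolve_left (hnall i)
    ext e
    constructor
    · intro he
      obtain ⟨j, hj | hj⟩ := hrange e he
      · exact absurd (hj ▸ he) (hnall j)
      · rw [hj]
        exact ⟨j, j + 1, (succ_val_iff' hn).mpr rfl, rfl⟩
    · rintro ⟨i, j, hji, rfl⟩
      rw [succ_val_iff' hn] at hji
      subst hji
      exact hall i

lemma rightSet_eq_range : rightSet n = Set.range (rightC : Fin n → _) := by
  ext e
  constructor
  · rintro ⟨i, j, hji, rfl⟩
    rw [succ_val_iff' hn] at hji
    subst hji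
    exact ⟨i, rfl⟩
  · rintro ⟨i, rfl⟩
    exact ⟨i, i + 1, (succ_val_iff' hn).mpr rfl, rfl⟩

lemma leftSet_eq_range : leftSet n = Set.range (leftC : Fin n → _) := by
  ext e
  constructor
  · rintro ⟨i, j, hji, rfl⟩
    rw [succ_val_iff' hn] at hji
    subst hji
    exact ⟨i, rfl⟩
  · rintro ⟨i, rfl⟩
    exact ⟨i, i + 1, (succ_val_iff' hn).mpr rfl, rfl⟩

lemma rightSet_ncard : (rightSet n).ncard = n := by
  rw [rightSet_eq_range hn, ← Set.image_univ,
    Set.ncard_image_of_injective _ (fun i j h => rightC_inj h), Set.ncard_univ,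
    Nat.card_eq_fintype_card, Fintype.card_fin]

lemma leftSet_ncard : (leftSet n).ncard = n := by
  rw [leftSet_eq_range hn, ← Set.image_univ,
    Set.ncard_image_of_injective _ (fun i j h => leftC_inj h), Set.ncard_univ,
    Nat.card_eq_fintype_card, Fintype.card_fin]

lemma rightSet_notDiag : ∀ e ∈ rightSet n, ¬ e.IsDiag := by
  rw [rightSet_eq_range hn]
  rintro e ⟨i, rfl⟩ hd
  rw [rightC, Sym2.mk_isDiag_iff, Prod.ext_iff] at hd
  exact absurd hd.2 (by simp)

lemma leftSet_notDiag : ∀ e ∈ leftSet n, ¬ e.IsDiag := by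
  rw [leftSet_eq_range hn]
  rintro e ⟨i, rfl⟩ hd
  rw [leftC, Sym2.mk_isDiag_iff, Prod.ext_iff] at hd
  exact absurd hd.2 (by simp)

lemma rightSet_disjoint : Disjoint (rightSet n) (tape n).edgeSet := by
  rw [Set.disjoint_left, rightSet_eq_range hn]
  rintro e ⟨i, rfl⟩ hedge
  rw [rightC, mem_edgeSet] at hedge
  have c0 := cast0 i; have c1 := cast1 i
  have := tape_adj_off hn (i := i) (r := 1) (r' := 2) (a := 0) (b := 1) (by omega) (by omega)
  rw [c0, c1] at this
  rw [this] at hedge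
  revert hedge; decide

lemma leftSet_disjoint : Disjoint (leftSet n) (tape n).edgeSet := by
  rw [Set.disjoint_left, leftSet_eq_range hn]
  rintro e ⟨i, rfl⟩ hedge
  rw [leftC, mem_edgeSet] at hedge
  have c0 := cast0 i; have c1 := cast1 i
  have := tape_adj_off hn (i := i) (r := 1) (r' := 2) (a := 1) (b := 0) (by omega) (by omega)
  rw [c0, c1] at this
  rw [this] at hedge
  revert hedge; decide

lemma rightSet_free : IsEmpty (SimpleGraph.cycleGraph 4 ↪g (tape n ⊔ fromEdgeSet (rightSet n))) :=
  noC4 hn true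

lemma leftSet_free : IsEmpty (SimpleGraph.cycleGraph 4 ↪g (tape n ⊔ fromEdgeSet (leftSet n))) :=
  noC4 hn false

end Char

/-- The minimum number of non-edges whose addition makes the tape gadget `C₄`-free is `4p`,
and the only two optimal completion sets are `{t_i b_{i+1}}` and `{t_{i+1} b_i}`. -/
theorem tapeGadget_optimal_completions (p : ℕ) (hp : 2 ≤ p) :
    (∀ S : Set (Sym2 (Fin (4 * p) × Fin 4)),
        (∀ e ∈ S, ¬ e.IsDiag) → Disjoint S (tapeGadget p).edgeSet →
        IsEmpty (SimpleGraph.cycleGraph 4 ↪g (tapeGadget p ⊔ SimpleGraph.fromEdgeSet S)) →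
        4 * p ≤ S.ncard) ∧
    {S : Set (Sym2 (Fin (4 * p) × Fin 4)) |
        (∀ e ∈ S, ¬ e.IsDiag) ∧ Disjoint S (tapeGadget p).edgeSet ∧
        IsEmpty (SimpleGraph.cycleGraph 4 ↪g (tapeGadget p ⊔ SimpleGraph.fromEdgeSet S)) ∧
        S.ncard = 4 * p} =
      {{e | ∃ i j : Fin (4 * p), (j : ℕ) = ((i : ℕ) + 1) % (4 * p) ∧
          e = s((i, (1 : Fin 4)), (j, (2 : Fin 4)))},
       {e | ∃ i j : Fin (4 * p), (j : ℕ) = ((i : ℕ) + 1) % (4 * p) ∧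
          e = s((j, (1 : Fin 4)), (i, (2 : Fin 4)))}} := by
  haveI : NeZero (4 * p) := ⟨by omega⟩
  have hn : 8 ≤ 4 * p := by omega
  have htape : tapeGadget p = tape (4 * p) := rfl
  constructor
  · intro S h1 h2 h3
    rw [htape] at h2 h3
    exact lower_bound hn h3 h2
  · ext S
    simp only [Set.mem_setOf_eq, Set.mem_insert_iff, Set.mem_singleton_iff]
    constructor
    · rintro ⟨hd, hdisj, hfree, hcard⟩
      rw [htape] at hdisj hfree
      rcases S_char hn hfree hdisj hcard with h | h
      · exact Or.inl (by rw [h]; rfl)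
      · exact Or.inr (by rw [h]; rfl)
    · rintro (rfl | rfl)
      · exact ⟨rightSet_notDiag hn, by rw [htape]; exact rightSet_disjoint hn,
          by rw [htape]; exact rightSet_free hn, rightSet_ncard hn⟩
      · exact ⟨leftSet_notDiag hn, by rw [htape]; exact leftSet_disjoint hn,
          by rw [htape]; exact leftSet_free hn, leftSet_ncard hn⟩
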